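/- arXiv:2309.06614 — 2 statements merged into one kernel-verified Lean document; each statement's English description precedes it below -/
import Mathlib

section
/- The right-angled Artin group functor A preserves equalizers of coreflexive pairs: if α, β : Γ → Δ are graph homomorphisms admitting a common retract ρ : Δ → Γ (ρ ∘ α = id_Γ = ρ ∘ β), and Θ is the full subgraph of Γ on the vertices v with αv = βv, then the subgroup of AΓ generated by the vertices of Θ is exactly the equalizer subgroup {g ∈ AΓ : (Aα)g = (Aβ)g}, and this subgroup is isomorphic to AΘ. -/
/-- A (reflexive, symmetric) graph: a set of vertices with a reflexive
symmetric relation. -/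
structure Gph : Type 1 where
  V : Type
  rel : V → V → Prop
  refl : ∀ v, rel v v
  symm : ∀ {v w}, rel v w → rel w v

/-- A homomorphism of graphs: a function on vertices preserving the relation. -/
@[ext]
structure GphHom (Γ Δ : Gph) where
  toFun : Γ.V → Δ.V
  map_rel : ∀ {v w}, Γ.rel v w → Δ.rel (toFun v) (toFun w)

/-- The identity graph homomorphism. -/
def GphHom.id (Γ : Gph) : GphHom Γ Γ :=
  ⟨fun v => v, fun h => h⟩

/-- Composition of graph homomorphisms. -/
def GphHom.comp {Γ Δ Θ : Gph} (ψ : GphHom Δ Θ) (φ : GphHom Γ Δ) : GphHom Γ Θ :=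
  ⟨fun v => ψ.toFun (φ.toFun v), fun h => ψ.map_rel (φ.map_rel h)⟩

/-- The commutator relators of the right-angled Artin group of `Γ`. -/
def raagRels (Γ : Gph) : Set (FreeGroup Γ.V) :=
  { r | ∃ v w, Γ.rel v w ∧
      r = FreeGroup.of v * FreeGroup.of w * (FreeGroup.of v)⁻¹ * (FreeGroup.of w)⁻¹ }

/-- The right-angled Artin group of a graph `Γ`: generated by the vertices,
with commutation relations given by the edges. -/
abbrev Raag (Γ : Gph) : Type :=
  PresentedGroup (raagRels Γ)

/-- The image of a vertex `v` as a generator of the right-angled Artin group. -/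
def Raag.of {Γ : Gph} (v : Γ.V) : Raag Γ :=
  PresentedGroup.of v

/-- Related vertices commute in the right-angled Artin group. -/
theorem Raag.commute_of {Γ : Gph} {v w : Γ.V} (h : Γ.rel v w) :
    Commute (Raag.of v) (Raag.of w) := by
  have h1 : (PresentedGroup.mk (raagRels Γ))
      (FreeGroup.of v * FreeGroup.of w * (FreeGroup.of v)⁻¹ * (FreeGroup.of w)⁻¹) = 1 := by
    apply (QuotientGroup.eq_one_iff _).2
    exact Subgroup.subset_normalClosure ⟨v, w, h, rfl⟩
  rw [← commutatorElement_eq_one_iff_commute]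
  simpa only [commutatorElement_def, map_mul, map_inv, Raag.of, PresentedGroup.of] using h1

/-- The universal property of the right-angled Artin group. -/
def Raag.lift {Γ : Gph} {G : Type*} [Group G] (f : Γ.V → G)
    (hf : ∀ {v w}, Γ.rel v w → Commute (f v) (f w)) : Raag Γ →* G :=
  PresentedGroup.toGroup (f := f) (by
    rintro r ⟨v, w, hvw, rfl⟩
    have := commutatorElement_eq_one_iff_commute.2 (hf hvw)
    rw [commutatorElement_def] at this
    simpa only [map_mul, map_inv, FreeGroup.lift_apply_of] using this)

@[simp]
theorem Raag.lift_of {Γ : Gph} {G : Type*} [Group G] (f : Γ.V → G)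
    (hf : ∀ {v w}, Γ.rel v w → Commute (f v) (f w)) (v : Γ.V) :
    Raag.lift f hf (Raag.of v) = f v :=
  PresentedGroup.toGroup.of _

theorem Raag.hom_ext {Γ : Gph} {G : Type*} [Group G] {f g : Raag Γ →* G}
    (h : ∀ v, f (Raag.of v) = g (Raag.of v)) : f = g :=
  PresentedGroup.ext h

/-- The group homomorphism `Aφ` induced by a graph homomorphism `φ`. -/
def GphHom.map {Γ Δ : Gph} (φ : GphHom Γ Δ) : Raag Γ →* Raag Δ :=
  Raag.lift (fun v => Raag.of (φ.toFun v)) (fun h => Raag.commute_of (φ.map_rel h))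

@[simp]
theorem GphHom.map_of {Γ Δ : Gph} (φ : GphHom Γ Δ) (v : Γ.V) :
    φ.map (Raag.of v) = Raag.of (φ.toFun v) :=
  Raag.lift_of _ (fun h => Raag.commute_of (φ.map_rel h)) v

/-- The commutation graph of a group `G`: vertices are elements of `G`,
related exactly when they commute. -/
abbrev commGraph (G : Type) [Group G] : Gph where
  V := G
  rel g h := g * h = h * g
  refl _ := rfl
  symm h := h.symm

/-- `AC G`: the right-angled Artin group of the commutation graph of `G`. -/
abbrev AC (G : Type) [Group G] : Type :=
  Raag (commGraph G)

/-- `ACf : ACG →* ACH`, `[g] ↦ [f g]`, induced by a group homomorphism `f`. -/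
def ACmap {G H : Type} [Group G] [Group H] (f : G →* H) : AC G →* AC H :=
  GphHom.map (Γ := commGraph G) (Δ := commGraph H)
    ⟨f, fun {a b} h => show f a * f b = f b * f a by
      rw [← map_mul, show a * b = b * a from h, map_mul]⟩

@[simp]
theorem ACmap_of {G H : Type} [Group G] [Group H] (f : G →* H) (g : G) :
    ACmap f (Raag.of (Γ := commGraph G) g) = Raag.of (Γ := commGraph H) (f g) :=
  GphHom.map_of _ _

/-- The counit `ε_G : ACG →* G`, `[g] ↦ g`. -/
def ACcounit (G : Type) [Group G] : AC G →* G :=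
  Raag.lift (Γ := commGraph G) (fun g => g) (fun h => h)

@[simp]
theorem ACcounit_of {G : Type} [Group G] (g : G) :
    ACcounit G (Raag.of (Γ := commGraph G) g) = g :=
  Raag.lift_of (Γ := commGraph G) (fun g => g) (fun h => h) g

/-- The comultiplication `δ_G : ACG →* AC(ACG)`, `[g] ↦ [[g]]`. -/
def ACcomul (G : Type) [Group G] : AC G →* AC (AC G) :=
  Raag.lift (Γ := commGraph G)
    (fun g => Raag.of (Γ := commGraph (AC G)) (Raag.of (Γ := commGraph G) g))
    (fun h => Raag.commute_of (Raag.commute_of h))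

@[simp]
theorem ACcomul_of {G : Type} [Group G] (g : G) :
    ACcomul G (Raag.of (Γ := commGraph G) g) =
      Raag.of (Γ := commGraph (AC G)) (Raag.of (Γ := commGraph G) g) :=
  Raag.lift_of (Γ := commGraph G) _ (fun h => Raag.commute_of (Raag.commute_of h)) g

/-- The canonical `AC`-coalgebra structure map on a right-angled Artin group,
sending each vertex generator `v` to `[v]`. -/
def raagCoalgStr (Γ : Gph) : Raag Γ →* AC (Raag Γ) :=
  Raag.lift (fun v => Raag.of (Γ := commGraph (Raag Γ)) (Raag.of v))
    (fun h => Raag.commute_of (Raag.commute_of h))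

@[simp]
theorem raagCoalgStr_of {Γ : Gph} (v : Γ.V) :
    raagCoalgStr Γ (Raag.of v) = Raag.of (Γ := commGraph (Raag Γ)) (Raag.of v) :=
  Raag.lift_of _ (fun h => Raag.commute_of (Raag.commute_of h)) v

/-- An `AC`-coalgebra structure on a group `G` is a group homomorphism
`𝔤 : G →* ACG` satisfying the counit and coassociativity laws. -/
def IsACCoalgebra {G : Type} [Group G] (𝔤 : G →* AC G) : Prop :=
  (ACcounit G).comp 𝔤 = MonoidHom.id G ∧ (ACmap 𝔤).comp 𝔤 = (ACcomul G).comp 𝔤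

/-- `f` is an `AC`-cohomomorphism from `(G, 𝔤)` to `(H, 𝔥)`. -/
def IsACCohom {G H : Type} [Group G] [Group H]
    (𝔤 : G →* AC G) (𝔥 : H →* AC H) (f : G →* H) : Prop :=
  𝔥.comp f = (ACmap f).comp 𝔤
/-- The full subgraph of `Γ` on a set `S` of vertices. -/
def Gph.full (Γ : Gph) (S : Set Γ.V) : Gph where
  V := S
  rel v w := Γ.rel v w
  refl v := Γ.refl v
  symm h := Γ.symm h
section AuxLemmas

theorem Raag.closure_range_of (Γ : Gph) :
    Subgroup.closure (Set.range (Raag.of (Γ := Γ))) = ⊤ := by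
  rw [Subgroup.eq_top_iff']
  intro x
  obtain ⟨w, rfl⟩ := PresentedGroup.mk_surjective _ x
  refine FreeGroup.induction_on w ?_ ?_ ?_ ?_
  · simpa using Subgroup.one_mem _
  · exact fun v => Subgroup.subset_closure ⟨v, rfl⟩
  · intro v _
    rw [map_inv]
    exact Subgroup.inv_mem _ (Subgroup.subset_closure ⟨v, rfl⟩)
  · intro x y hx hy
    rw [map_mul]
    exact Subgroup.mul_mem _ hx hy

theorem GphHom.map_comp' {Γ Δ Θ : Gph} (ψ : GphHom Δ Θ) (φ : GphHom Γ Δ) :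
    (ψ.comp φ).map = ψ.map.comp φ.map :=
  Raag.hom_ext (fun v => by simp [GphHom.comp])

theorem GphHom.map_id' (Γ : Gph) : (GphHom.id Γ).map = MonoidHom.id (Raag Γ) :=
  Raag.hom_ext (fun v => by simp [GphHom.id])

end AuxLemmas
/-- The raag functor preserves equalizers of coreflexive pairs: if `α, β : Γ → Δ`
admit a common retract `ρ` and `Θ` is the full subgraph of `Γ` on the vertices
where `α` and `β` agree, then the subgroup of `AΓ` generated by the vertices of
`Θ` is exactly the equalizer subgroup `{g | (Aα)g = (Aβ)g}`, and this subgroup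
is isomorphic to `AΘ`. -/
theorem raag_preserves_coreflexive_equalizers {Γ Δ : Gph} (α β : GphHom Γ Δ)
    (ρ : GphHom Δ Γ) (h₁ : ρ.comp α = GphHom.id Γ) (h₂ : ρ.comp β = GphHom.id Γ) :
    ((Subgroup.closure (Raag.of '' {v | α.toFun v = β.toFun v}) : Subgroup (Raag Γ)) :
        Set (Raag Γ)) = {g : Raag Γ | α.map g = β.map g} ∧
    Nonempty (Raag (Γ.full {v | α.toFun v = β.toFun v}) ≃*
      (Subgroup.closure (Raag.of '' {v | α.toFun v = β.toFun v}) : Subgroup (Raag Γ))) := by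
  classical
  set S : Set Γ.V := {v | α.toFun v = β.toFun v} with hS
  have hρα : ∀ v, ρ.toFun (α.toFun v) = v := fun v =>
    congrFun (congrArg GphHom.toFun h₁) v
  have hρβ : ∀ v, ρ.toFun (β.toFun v) = v := fun v =>
    congrFun (congrArg GphHom.toFun h₂) v
  have hαinj : Function.Injective α.map := by
    have hcomp : ρ.map.comp α.map = MonoidHom.id (Raag Γ) := by
      rw [← GphHom.map_comp', h₁, GphHom.map_id']
    intro a b hab
    have h' := congrArg ρ.map hab
    calc a = (ρ.map.comp α.map) a := by rw [hcomp]; rfl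
    _ = (ρ.map.comp α.map) b := h'
    _ = b := by rw [hcomp]; rfl
  -- the projection p : Raag Γ →* Raag Γ killing generators outside S
  let p : Raag Γ →* Raag Γ := Raag.lift (fun v => if v ∈ S then Raag.of v else 1)
    (fun {v w} h => by
      by_cases hv : v ∈ S <;> by_cases hw : w ∈ S <;>
        simp [hv, hw, Raag.commute_of h])
  have hp_of : ∀ v, p (Raag.of v) = if v ∈ S then Raag.of v else 1 :=
    fun v => Raag.lift_of _ _ v
  -- the retraction r : Raag Δ →* Raag Δ killing generators outside range α
  let r : Raag Δ →* Raag Δ := Raag.lift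
    (fun d => if d ∈ Set.range α.toFun then Raag.of d else 1)
    (fun {d e} h => by
      by_cases hd : d ∈ Set.range α.toFun <;> by_cases he : e ∈ Set.range α.toFun <;>
        simp [hd, he, Raag.commute_of h])
  have hr_of : ∀ d, r (Raag.of d) = if d ∈ Set.range α.toFun then Raag.of d else 1 :=
    fun d => Raag.lift_of _ _ d
  have hrα : r.comp α.map = α.map := Raag.hom_ext (fun v => by
    rw [MonoidHom.comp_apply, GphHom.map_of, hr_of, if_pos ⟨v, rfl⟩])
  have hrβ : r.comp β.map = α.map.comp p := Raag.hom_ext (fun v => by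
    rw [MonoidHom.comp_apply, MonoidHom.comp_apply, GphHom.map_of, hr_of, hp_of]
    by_cases hv : v ∈ S
    · rw [if_pos ⟨v, hv⟩, if_pos hv, GphHom.map_of,
        show α.toFun v = β.toFun v from hv]
    · have hnot : β.toFun v ∉ Set.range α.toFun := by
        rintro ⟨w, hw⟩
        apply hv
        show α.toFun v = β.toFun v
        have hwv : w = v := by rw [← hρα w, hw, hρβ v]
        rw [← hw, hwv]
      rw [if_neg hnot, if_neg hv, map_one])
  -- every element in the range of p lies in the closure
  have hpmem : ∀ g : Raag Γ, p g ∈ Subgroup.closure (Raag.of '' S) := by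
    intro g
    have hg : g ∈ Subgroup.closure (Set.range (Raag.of (Γ := Γ))) := by
      rw [Raag.closure_range_of]; trivial
    refine Subgroup.closure_induction ?_ ?_ ?_ ?_ hg
    · rintro x ⟨v, rfl⟩
      rw [hp_of]
      by_cases hv : v ∈ S
      · rw [if_pos hv]; exact Subgroup.subset_closure ⟨v, hv, rfl⟩
      · rw [if_neg hv]; exact Subgroup.one_mem _
    · rw [map_one]; exact Subgroup.one_mem _
    · intro x y _ _ ihx ihy
      rw [map_mul]; exact Subgroup.mul_mem _ ihx ihy
    · intro x _ ihx
      rw [map_inv]; exact Subgroup.inv_mem _ ihx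
  -- key: equalizer elements lie in the closure
  have key : ∀ g : Raag Γ, α.map g = β.map g → g ∈ Subgroup.closure (Raag.of '' S) := by
    intro g hg
    have h3 : r (α.map g) = r (β.map g) := congrArg r hg
    rw [show r (α.map g) = α.map g from congrFun (congrArg DFunLike.coe hrα) g,
      show r (β.map g) = α.map (p g) from congrFun (congrArg DFunLike.coe hrβ) g] at h3
    have h4 : g = p g := hαinj h3
    rw [h4]; exact hpmem g
  constructor
  · apply Set.Subset.antisymm
    · intro g hg
      have hg' : g ∈ Subgroup.closure (Raag.of '' S) := hg
      refine Subgroup.closure_induction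
        (p := fun x _ => α.map x = β.map x) ?_ ?_ ?_ ?_ hg'
      · rintro x ⟨v, hv, rfl⟩
        show α.map (Raag.of v) = β.map (Raag.of v)
        rw [GphHom.map_of, GphHom.map_of, show α.toFun v = β.toFun v from hv]
      · show α.map 1 = β.map 1
        rw [map_one, map_one]
      · intro x y _ _ ihx ihy
        show α.map (x * y) = β.map (x * y)
        rw [map_mul, map_mul, ihx, ihy]
      · intro x _ ihx
        show α.map x⁻¹ = β.map x⁻¹
        rw [map_inv, map_inv, ihx]
    · intro g hg
      exact key g hg
  · -- isomorphism with Raag of the full subgraph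
    let inc : GphHom (Γ.full S) Γ := ⟨Subtype.val, fun h => h⟩
    let ι : Raag (Γ.full S) →* Raag Γ := inc.map
    have hι_of : ∀ v : (Γ.full S).V, ι (Raag.of v) = Raag.of v.1 :=
      fun v => GphHom.map_of inc v
    let π : Raag Γ →* Raag (Γ.full S) := Raag.lift
      (fun v => if h : v ∈ S then Raag.of (⟨v, h⟩ : (Γ.full S).V) else 1)
      (fun {v w} h => by
        by_cases hv : v ∈ S
        · by_cases hw : w ∈ S
          · simpa [hv, hw] using
              Raag.commute_of (show (Γ.full S).rel ⟨v, hv⟩ ⟨w, hw⟩ from h)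
          · simp [hv, hw]
        · simp [hv])
    have hπ_of : ∀ v, π (Raag.of v) =
        if h : v ∈ S then Raag.of (⟨v, h⟩ : (Γ.full S).V) else 1 :=
      fun v => Raag.lift_of _ _ v
    have hπι : π.comp ι = MonoidHom.id _ := Raag.hom_ext (fun v => by
      rw [MonoidHom.comp_apply, MonoidHom.id_apply, hι_of, hπ_of, dif_pos v.2]
      rfl)
    have hιinj : Function.Injective ι := by
      intro a b hab
      have h' := congrArg π hab
      calc a = (π.comp ι) a := by rw [hπι]; rfl
      _ = (π.comp ι) b := h'
      _ = b := by rw [hπι]; rfl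
    have hrange : ι.range = Subgroup.closure (Raag.of '' S) := by
      rw [MonoidHom.range_eq_map, ← Raag.closure_range_of (Γ.full S),
        MonoidHom.map_closure]
      congr 1
      ext x
      constructor
      · rintro ⟨_, ⟨v, rfl⟩, rfl⟩
        exact ⟨v.1, v.2, (hι_of v).symm⟩
      · rintro ⟨v, hv, rfl⟩
        exact ⟨Raag.of (⟨v, hv⟩ : (Γ.full S).V), ⟨⟨v, hv⟩, rfl⟩, hι_of _⟩
    exact ⟨(MonoidHom.ofInjective hιinj).trans (MulEquiv.subgroupCongr hrange)⟩
end

section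
/- The right-angled Artin group functor A : Gph → Grp reflects isomorphisms: if φ : Γ → Δ is a graph homomorphism such that the induced group homomorphism Aφ : AΓ → AΔ is an isomorphism of groups, then φ is an isomorphism of graphs. -/
theorem Raag.of_injective {Γ : Gph} : Function.Injective (Raag.of (Γ := Γ)) := by
  classical
  intro v w hvw
  have := congrArg (Raag.lift (G := Multiplicative (Γ.V →₀ ℤ))
      (fun u => Multiplicative.ofAdd (Finsupp.single u 1))
      (fun _ => Commute.all _ _)) hvw
  simp only [Raag.lift_of] at this
  have h2 : (Finsupp.single v (1:ℤ)) = Finsupp.single w 1 :=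
    Multiplicative.ofAdd.injective this
  exact (Finsupp.single_left_injective one_ne_zero) h2

theorem swap_not_commute : ¬ Commute (Equiv.swap (0:Fin 3) 1) (Equiv.swap (1:Fin 3) 2) := by
  unfold Commute SemiconjBy
  decide

theorem Raag.rel_of_commute {Γ : Gph} {v w : Γ.V}
    (h : Commute (Raag.of v) (Raag.of w)) : Γ.rel v w := by
  classical
  by_contra hrel
  have hvw : v ≠ w := fun e => hrel (e ▸ Γ.refl v)
  set F : Γ.V → Equiv.Perm (Fin 3) := fun u =>
    if u = v then Equiv.swap 0 1 else if u = w then Equiv.swap 1 2 else 1 with hF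
  have hcomm : ∀ {x y}, Γ.rel x y → Commute (F x) (F y) := by
    intro x y hxy
    by_cases hx : x = v
    · by_cases hy : y = v
      · simp [hF, hx, hy]
      · by_cases hy' : y = w
        · exact absurd (hx ▸ hy' ▸ hxy) hrel
        · simp [hF, hx, hy, hy']
    · by_cases hx' : x = w
      · by_cases hy : y = v
        · exact absurd (Γ.symm (hx' ▸ hy ▸ hxy)) hrel
        · by_cases hy' : y = w
          · simp [hF, hx', hy, hy']
          · simp [hF, hx, hx', hy, hy']
      · simp [hF, hx, hx']
  have hmap := h.map (Raag.lift F hcomm)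
  simp only [Raag.lift_of] at hmap
  have hFv : F v = Equiv.swap 0 1 := by simp [hF]
  have hFw : F w = Equiv.swap 1 2 := by simp [hF, Ne.symm hvw]
  rw [hFv, hFw] at hmap
  exact absurd hmap swap_not_commute

/-- The raag functor reflects isomorphisms: if `Aφ : AΓ →* AΔ` is an
isomorphism of groups (i.e. bijective), then `φ` is an isomorphism of graphs. -/
theorem raag_reflects_isomorphisms {Γ Δ : Gph} (φ : GphHom Γ Δ)
    (h : Function.Bijective φ.map) :
    ∃ ψ : GphHom Δ Γ, ψ.comp φ = GphHom.id Γ ∧ φ.comp ψ = GphHom.id Δ := by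
  classical
  have hinj : Function.Injective φ.toFun := by
    intro v1 v2 hv
    apply Raag.of_injective
    apply h.1
    simp [hv]
  have hsurj : Function.Surjective φ.toFun := by
    intro w
    by_contra hw
    push_neg at hw
    set g : Raag Δ →* Multiplicative ℤ := Raag.lift
      (fun u => if u = w then Multiplicative.ofAdd (1:ℤ) else 1)
      (fun _ => Commute.all _ _) with hg
    obtain ⟨x, hx⟩ := h.2 (Raag.of w)
    have h1 : g.comp φ.map = 1 := by
      apply Raag.hom_ext
      intro v
      simp [hg, hw v]
    have h2 : g (Raag.of (Γ := Δ) w) = 1 := by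
      rw [← hx]
      have := DFunLike.congr_fun h1 x
      simpa using this
    simp [hg] at h2
  let e : Γ.V ≃ Δ.V := Equiv.ofBijective φ.toFun ⟨hinj, hsurj⟩
  have hrefl : ∀ {w1 w2}, Δ.rel w1 w2 → Γ.rel (e.symm w1) (e.symm w2) := by
    intro w1 w2 hrel
    apply Raag.rel_of_commute
    have hrel' : Δ.rel (φ.toFun (e.symm w1)) (φ.toFun (e.symm w2)) := by
      have h1 : φ.toFun (e.symm w1) = w1 := e.apply_symm_apply w1
      have h2 : φ.toFun (e.symm w2) = w2 := e.apply_symm_apply w2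
      rw [h1, h2]; exact hrel
    have hc : Commute (φ.map (Raag.of (e.symm w1))) (φ.map (Raag.of (e.symm w2))) := by
      simpa using Raag.commute_of hrel'
    exact h.1 (by simpa [map_mul] using hc.eq)
  refine ⟨⟨e.symm, hrefl⟩, ?_, ?_⟩
  · ext v
    exact e.symm_apply_apply v
  · ext w
    exact e.apply_symm_apply w
end
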